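/- Let n ≥ 4 and let ℓ : Fin n ⊕ Fin n → {lines in ℝ³} be a map such that: for all i ≠ j, ℓ(inl i) ∩ ℓ(inl j) ≠ ∅ and ℓ(inr i) ∩ ℓ(inr j) ≠ ∅; for all i ≠ j, ℓ(inl i) ∩ ℓ(inr j) ≠ ∅; and for all i, ℓ(inl i) ∩ ℓ(inr i) = ∅. Then there is a plane in ℝ³ containing all the lines ℓ(v), v ∈ Fin n ⊕ Fin n. -/
import Mathlib


/-- A line in ℝ³ is a one-dimensional affine subspace. -/
def IsLine3 (s : AffineSubspace ℝ (EuclideanSpace ℝ (Fin 3))) : Prop :=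
  (s : Set (EuclideanSpace ℝ (Fin 3))).Nonempty ∧ Module.finrank ℝ s.direction = 1

/-- A plane in ℝ³ is a two-dimensional affine subspace. -/
def IsPlane3 (s : AffineSubspace ℝ (EuclideanSpace ℝ (Fin 3))) : Prop :=
  (s : Set (EuclideanSpace ℝ (Fin 3))).Nonempty ∧ Module.finrank ℝ s.direction = 2

local notation "E3" => EuclideanSpace ℝ (Fin 3)

lemma line_eq_affineSpan_pair {L : AffineSubspace ℝ E3} (hL : IsLine3 L)
    {x y : E3} (hx : x ∈ L) (hy : y ∈ L) (hxy : x ≠ y) :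
    L = affineSpan ℝ {x, y} := by
  have hle : affineSpan ℝ ({x, y} : Set E3) ≤ L :=
    affineSpan_le.2 (by simp [Set.insert_subset_iff, hx, hy])
  have hdir : (affineSpan ℝ ({x, y} : Set E3)).direction = L.direction := by
    apply Submodule.eq_of_le_of_finrank_le (AffineSubspace.direction_le hle)
    rw [direction_affineSpan, vectorSpan_pair, hL.2,
      finrank_span_singleton (vsub_ne_zero.2 hxy)]
  exact (AffineSubspace.ext_of_direction_eq hdir
    ⟨x, mem_affineSpan ℝ (by simp), hx⟩).symm

lemma line_le_of_pair {L P : AffineSubspace ℝ E3} (hL : IsLine3 L)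
    {x y : E3} (hx : x ∈ L) (hy : y ∈ L) (hxy : x ≠ y)
    (hxP : x ∈ P) (hyP : y ∈ P) : L ≤ P := by
  rw [line_eq_affineSpan_pair hL hx hy hxy]
  exact affineSpan_le.2 (by simp [Set.insert_subset_iff, hxP, hyP])

lemma line_inter_unique {L M : AffineSubspace ℝ E3} (hL : IsLine3 L) (hM : IsLine3 M)
    (hne : L ≠ M) {x y : E3} (hxL : x ∈ L) (hxM : x ∈ M) (hyL : y ∈ L) (hyM : y ∈ M) :
    x = y := by
  by_contra h
  exact hne ((line_eq_affineSpan_pair hL hxL hyL h).trans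
    (line_eq_affineSpan_pair hM hxM hyM h).symm)

lemma line_two_points {L : AffineSubspace ℝ E3} (hL : IsLine3 L) :
    ∃ x y : E3, x ∈ L ∧ y ∈ L ∧ x ≠ y := by
  obtain ⟨x, hx⟩ := hL.1
  have hbot : L.direction ≠ ⊥ := by
    intro h
    have := hL.2
    rw [h] at this
    simp at this
  obtain ⟨v, hv, hv0⟩ := Submodule.exists_mem_ne_zero_of_ne_bot hbot
  refine ⟨x, v +ᵥ x, hx, L.vadd_mem_of_mem_direction hv hx, ?_⟩
  intro h
  apply hv0
  have h2 : v +ᵥ x = (0 : E3) +ᵥ x := by rw [← h]; simp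
  exact vadd_right_cancel x h2

lemma exists_plane_of_line_of_notMem {L : AffineSubspace ℝ E3} (hL : IsLine3 L)
    {p : E3} (hp : p ∉ L) :
    ∃ P : AffineSubspace ℝ E3, IsPlane3 P ∧ L ≤ P ∧ p ∈ P := by
  obtain ⟨x, y, hx, hy, hxy⟩ := line_two_points hL
  have hai : AffineIndependent ℝ ![p, x, y] := by
    rw [affineIndependent_iff_not_collinear]
    intro hc
    have hrange : Set.range ![p, x, y] = ({p, x, y} : Set E3) := by
      ext z
      simp only [Matrix.range_cons, Matrix.range_empty, Set.mem_insert_iff,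
        Set.union_empty, Set.mem_union, Set.mem_setOf_eq, Set.mem_singleton_iff]
    rw [hrange] at hc
    have hmem : p ∈ affineSpan ℝ ({x, y} : Set E3) :=
      hc.mem_affineSpan_of_mem_of_ne (by simp) (by simp) (by simp) hxy
    rw [← line_eq_affineSpan_pair hL hx hy hxy] at hmem
    exact hp hmem
  refine ⟨affineSpan ℝ (Set.range ![p, x, y]), ⟨?_, ?_⟩, ?_, ?_⟩
  · exact ⟨p, subset_affineSpan ℝ _ (by simp [Matrix.range_cons])⟩
  · rw [direction_affineSpan]
    exact hai.finrank_vectorSpan (by simp)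
  · refine line_le_of_pair hL hx hy hxy ?_ ?_ <;>
      exact subset_affineSpan ℝ _ (by simp [Matrix.range_cons])
  · exact subset_affineSpan ℝ _ (by simp [Matrix.range_cons])

lemma pick3 {n : ℕ} (hn : 4 ≤ n) (j : Fin n) :
    ∃ i1 i2 i3 : Fin n, i1 ≠ i2 ∧ i1 ≠ i3 ∧ i2 ≠ i3 ∧ i1 ≠ j ∧ i2 ≠ j ∧ i3 ≠ j := by
  have h0 : 0 < n := by omega
  have h1 : 1 < n := by omega
  have h2 : 2 < n := by omega
  have h3 : 3 < n := by omega
  by_cases e0 : j.1 = 0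
  · exact ⟨⟨1, h1⟩, ⟨2, h2⟩, ⟨3, h3⟩, by simp [Fin.ext_iff, e0], by simp [Fin.ext_iff, e0],
      by simp [Fin.ext_iff, e0], by simp [Fin.ext_iff, e0], by simp [Fin.ext_iff, e0],
      by simp [Fin.ext_iff, e0]⟩
  by_cases e1 : j.1 = 1
  · exact ⟨⟨0, h0⟩, ⟨2, h2⟩, ⟨3, h3⟩, by simp [Fin.ext_iff, e1], by simp [Fin.ext_iff, e1],
      by simp [Fin.ext_iff, e1], by simp [Fin.ext_iff, e1], by simp [Fin.ext_iff, e1],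
      by simp [Fin.ext_iff, e1]⟩
  by_cases e2 : j.1 = 2
  · exact ⟨⟨0, h0⟩, ⟨1, h1⟩, ⟨3, h3⟩, by simp [Fin.ext_iff, e2], by simp [Fin.ext_iff, e2],
      by simp [Fin.ext_iff, e2], by simp [Fin.ext_iff, e2], by simp [Fin.ext_iff, e2],
      by simp [Fin.ext_iff, e2]⟩
  · exact ⟨⟨0, h0⟩, ⟨1, h1⟩, ⟨2, h2⟩, by simp [Fin.ext_iff], by simp [Fin.ext_iff],
      by simp [Fin.ext_iff], by simp [Fin.ext_iff]; omega, by simp [Fin.ext_iff]; omega,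
      by simp [Fin.ext_iff]; omega⟩

lemma pick2 {n : ℕ} (hn : 4 ≤ n) (j j' : Fin n) :
    ∃ i1 i2 : Fin n, i1 ≠ i2 ∧ i1 ≠ j ∧ i1 ≠ j' ∧ i2 ≠ j ∧ i2 ≠ j' := by
  obtain ⟨i1, i2, i3, h12, h13, h23, h1j, h2j, h3j⟩ := pick3 hn j
  by_cases e1 : i1 = j'
  · exact ⟨i2, i3, h23, h2j, fun h => h12 (h ▸ e1 ▸ rfl), h3j, fun h => h13 (h ▸ e1 ▸ rfl)⟩
  by_cases e2 : i2 = j'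
  · exact ⟨i1, i3, h13, h1j, e1, h3j, fun h => h23 (h ▸ e2 ▸ rfl)⟩
  · exact ⟨i1, i2, h12, h1j, e1, h2j, e2⟩

/-- In any line realization of the complete graph on `2n` vertices minus a perfect
matching (`n ≥ 4`), all the lines are coplanar. -/
theorem lines_of_Kn_minus_matching_coplanar
    (n : ℕ) (hn : 4 ≤ n)
    (ℓ : Fin n ⊕ Fin n → AffineSubspace ℝ (EuclideanSpace ℝ (Fin 3)))
    (hline : ∀ v, IsLine3 (ℓ v))
    (hAA : ∀ i j : Fin n, i ≠ j →
      ((ℓ (Sum.inl i) : Set (EuclideanSpace ℝ (Fin 3))) ∩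
        (ℓ (Sum.inl j) : Set (EuclideanSpace ℝ (Fin 3)))).Nonempty)
    (hBB : ∀ i j : Fin n, i ≠ j →
      ((ℓ (Sum.inr i) : Set (EuclideanSpace ℝ (Fin 3))) ∩
        (ℓ (Sum.inr j) : Set (EuclideanSpace ℝ (Fin 3)))).Nonempty)
    (hAB : ∀ i j : Fin n, i ≠ j →
      ((ℓ (Sum.inl i) : Set (EuclideanSpace ℝ (Fin 3))) ∩
        (ℓ (Sum.inr j) : Set (EuclideanSpace ℝ (Fin 3)))).Nonempty)
    (hMatch : ∀ i : Fin n,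
      (ℓ (Sum.inl i) : Set (EuclideanSpace ℝ (Fin 3))) ∩
        (ℓ (Sum.inr i) : Set (EuclideanSpace ℝ (Fin 3))) = ∅) :
    ∃ P : AffineSubspace ℝ (EuclideanSpace ℝ (Fin 3)),
      IsPlane3 P ∧ ∀ v : Fin n ⊕ Fin n, ℓ v ≤ P := by
  classical
  -- abbreviations
  have hla : ∀ i, IsLine3 (ℓ (Sum.inl i)) := fun i => hline (Sum.inl i)
  have hlb : ∀ i, IsLine3 (ℓ (Sum.inr i)) := fun i => hline (Sum.inr i)
  -- matching lines are disjoint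
  have hm : ∀ (i : Fin n) (x : E3), x ∈ ℓ (Sum.inl i) → x ∈ ℓ (Sum.inr i) → False := by
    intro i x h1 h2
    have h := hMatch i
    rw [Set.eq_empty_iff_forall_notMem] at h
    exact h x ⟨h1, h2⟩
  -- distinct indices give distinct a-lines
  have hane : ∀ i j : Fin n, i ≠ j → ℓ (Sum.inl i) ≠ ℓ (Sum.inl j) := by
    intro i j hij h
    obtain ⟨x, hx1, hx2⟩ := hAB j i (Ne.symm hij)
    exact hm i x (h ▸ hx1) hx2
  by_cases hconc : ∃ p : E3, ∀ i, p ∈ ℓ (Sum.inl i)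
  · -- all a-lines concurrent at p
    obtain ⟨p, hp⟩ := hconc
    have hpb : ∀ i, p ∉ ℓ (Sum.inr i) := fun i h => hm i p (hp i) h
    have h0 : (0 : ℕ) < n := by omega
    have h1 : (1 : ℕ) < n := by omega
    set e0 : Fin n := ⟨0, h0⟩ with he0
    set e1 : Fin n := ⟨1, h1⟩ with he1
    have he01 : e0 ≠ e1 := by simp [he0, he1, Fin.ext_iff]
    obtain ⟨P, hP, hbP0, hpP⟩ := exists_plane_of_line_of_notMem (hlb e0) (hpb e0)
    have haP : ∀ i, i ≠ e0 → ℓ (Sum.inl i) ≤ P := by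
      intro i hi
      obtain ⟨x, hx1, hx2⟩ := hAB i e0 hi
      have hne : p ≠ x := fun h => hpb e0 (h ▸ hx2)
      exact line_le_of_pair (hla i) (hp i) hx1 hne hpP (hbP0 hx2)
    have hbP : ∀ j, j ≠ e0 → ℓ (Sum.inr j) ≤ P := by
      intro j hj
      obtain ⟨i1, i2, h12, h1e, h1j, h2e, h2j⟩ := pick2 hn e0 j
      obtain ⟨y1, hy1a, hy1b⟩ := hAB i1 j h1j
      obtain ⟨y2, hy2a, hy2b⟩ := hAB i2 j h2j
      have hy1P : y1 ∈ P := haP i1 h1e hy1a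
      have hy2P : y2 ∈ P := haP i2 h2e hy2a
      have hne : y1 ≠ y2 := by
        intro h
        have heq : y1 = p := line_inter_unique (hla i1) (hla i2) (hane i1 i2 h12)
          hy1a (h ▸ hy2a) (hp i1) (hp i2)
        exact hpb j (heq ▸ hy1b)
      exact line_le_of_pair (hlb j) hy1b hy2b hne hy1P hy2P
    have ha0 : ℓ (Sum.inl e0) ≤ P := by
      obtain ⟨z, hz1, hz2⟩ := hAB e0 e1 he01
      have hzP : z ∈ P := hbP e1 (Ne.symm he01) hz2
      have hne : p ≠ z := fun h => hpb e1 (h ▸ hz2)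
      exact line_le_of_pair (hla e0) (hp e0) hz1 hne hpP hzP
    refine ⟨P, hP, ?_⟩
    rintro (i | j)
    · by_cases hi : i = e0
      · exact hi ▸ ha0
      · exact haP i hi
    · by_cases hj : j = e0
      · exact hj ▸ hbP0
      · exact hbP j hj
  · -- not concurrent
    push_neg at hconc
    have h0 : (0 : ℕ) < n := by omega
    have h1 : (1 : ℕ) < n := by omega
    set e0 : Fin n := ⟨0, h0⟩ with he0
    set e1 : Fin n := ⟨1, h1⟩ with he1
    have he01 : e0 ≠ e1 := by simp [he0, he1, Fin.ext_iff]
    obtain ⟨p, hp0, hp1⟩ := hAA e0 e1 he01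
    obtain ⟨k, hk⟩ := hconc p
    have hk0 : k ≠ e0 := fun h => hk (h ▸ hp0)
    have hk1 : k ≠ e1 := fun h => hk (h ▸ hp1)
    obtain ⟨P, hP, haPk, hpP⟩ := exists_plane_of_line_of_notMem (hla k) hk
    have hthru : ∀ i, i ≠ k → p ∈ ℓ (Sum.inl i) → ℓ (Sum.inl i) ≤ P := by
      intro i hik hpi
      obtain ⟨q, hq1, hq2⟩ := hAA i k hik
      have hqp : p ≠ q := fun h => hk (h ▸ hq2)
      exact line_le_of_pair (hla i) hpi hq1 hqp hpP (haPk hq2)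
    have haP : ∀ i, ℓ (Sum.inl i) ≤ P := by
      intro i
      by_cases hik : i = k
      · exact hik ▸ haPk
      by_cases hpi : p ∈ ℓ (Sum.inl i)
      · exact hthru i hik hpi
      have hi0 : i ≠ e0 := fun h => hpi (h ▸ hp0)
      have hi1 : i ≠ e1 := fun h => hpi (h ▸ hp1)
      obtain ⟨x0, hx0i, hx0⟩ := hAA i e0 hi0
      obtain ⟨x1, hx1i, hx1⟩ := hAA i e1 hi1
      have h0P : x0 ∈ P := hthru e0 (Ne.symm hk0) hp0 hx0
      have h1P : x1 ∈ P := hthru e1 (Ne.symm hk1) hp1 hx1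
      have hne : x0 ≠ x1 := by
        intro h
        have heq : x0 = p := line_inter_unique (hla e0) (hla e1) (hane e0 e1 he01)
          hx0 (h ▸ hx1) hp0 hp1
        exact hpi (heq ▸ hx0i)
      exact line_le_of_pair (hla i) hx0i hx1i hne h0P h1P
    have hbP : ∀ j, ℓ (Sum.inr j) ≤ P := by
      intro j
      by_contra hc
      have hsub : ∀ x y : E3, x ∈ ℓ (Sum.inr j) → x ∈ P → y ∈ ℓ (Sum.inr j) → y ∈ P →
          x = y := by
        intro x y hx hxP hy hyP
        by_contra h
        exact hc (line_le_of_pair (hlb j) hx hy h hxP hyP)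
      obtain ⟨i1, i2, i3, h12, h13, h23, h1j, h2j, h3j⟩ := pick3 hn j
      obtain ⟨y, hya, hyb⟩ := hAB i1 j h1j
      have hyP : y ∈ P := haP i1 hya
      have hall : ∀ i, i ≠ j → y ∈ ℓ (Sum.inl i) := by
        intro i hij
        obtain ⟨z, hza, hzb⟩ := hAB i j hij
        have hzy : z = y := hsub z y hzb (haP i hza) hyb hyP
        exact hzy ▸ hza
      have hynb : y ∉ ℓ (Sum.inr i1) := fun h => hm i1 y (hall i1 h1j) h
      obtain ⟨z2, hz2a, hz2b⟩ := hAB i2 i1 (Ne.symm h12)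
      obtain ⟨z3, hz3a, hz3b⟩ := hAB i3 i1 (Ne.symm h13)
      have hz23 : z2 ≠ z3 := by
        intro h
        have heq : z2 = y := line_inter_unique (hla i2) (hla i3) (hane i2 i3 h23)
          hz2a (h ▸ hz3a) (hall i2 h2j) (hall i3 h3j)
        exact hynb (heq ▸ hz2b)
      have hbi1 : ℓ (Sum.inr i1) ≤ P :=
        line_le_of_pair (hlb i1) hz2b hz3b hz23 (haP i2 hz2a) (haP i3 hz3a)
      obtain ⟨w, hw1, hw2⟩ := hBB j i1 (Ne.symm h1j)
      have hwy : w = y := hsub w y hw1 (hbi1 hw2) hyb hyP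
      exact hynb (hwy ▸ hw2)
    refine ⟨P, hP, ?_⟩
    rintro (i | j)
    exacts [haP i, hbP j]
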